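/- Let a > 0 and b > 0 be reals with a/b irrational. Then the language L = {s_a^i s_b^j : a·i − b·j ≥ 0} over the two-letter alphabet {s_a, s_b} is not context-free. -/

import Mathlib

namespace CFPump
open scoped Classical

variable {T : Type} {N : Type}

mutual
inductive PT (T : Type) (N : Type) : Type where
  | leaf (t : T) : PT T N
  | node (n : N) (cs : PTs T N) : PT T N
inductive PTs (T : Type) (N : Type) : Type where
  | nil : PTs T N
  | cons (hd : PT T N) (tl : PTs T N) : PTs T N
end

mutual
def PT.size : PT T N → ℕ
  | .leaf _ => 1
  | .node _ cs => cs.size + 1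
def PTs.size : PTs T N → ℕ
  | .nil => 0
  | .cons hd tl => hd.size + tl.size
end

mutual
def PT.depth : PT T N → ℕ
  | .leaf _ => 0
  | .node _ cs => cs.depth + 1
def PTs.depth : PTs T N → ℕ
  | .nil => 0
  | .cons hd tl => max hd.depth tl.depth
end

def PT.sym : PT T N → Symbol T N
  | .leaf t => Symbol.terminal t
  | .node n _ => Symbol.nonterminal n

mutual
def PT.yield : PT T N → List T
  | .leaf t => [t]
  | .node _ cs => cs.yield
def PTs.yield : PTs T N → List T
  | .nil => []
  | .cons hd tl => hd.yield ++ tl.yield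
end

def PTs.syms : PTs T N → List (Symbol T N)
  | .nil => []
  | .cons hd tl => hd.sym :: tl.syms

def PTs.append : PTs T N → PTs T N → PTs T N
  | .nil, l => l
  | .cons hd tl, l => .cons hd (tl.append l)

def PTs.length : PTs T N → ℕ
  | .nil => 0
  | .cons _ tl => tl.length + 1

@[simp] lemma syms_nil : (PTs.nil : PTs T N).syms = [] := rfl
@[simp] lemma syms_cons (hd : PT T N) (tl : PTs T N) :
    (PTs.cons hd tl).syms = hd.sym :: tl.syms := rfl
@[simp] lemma yield_nil : (PTs.nil : PTs T N).yield = [] := rfl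
@[simp] lemma yield_cons (hd : PT T N) (tl : PTs T N) :
    (PTs.cons hd tl).yield = hd.yield ++ tl.yield := rfl
@[simp] lemma yield_leaf (t : T) : (PT.leaf t : PT T N).yield = [t] := rfl
@[simp] lemma yield_node (n : N) (cs : PTs T N) : (PT.node n cs).yield = cs.yield := rfl
@[simp] lemma sym_leaf (t : T) : (PT.leaf t : PT T N).sym = Symbol.terminal t := rfl
@[simp] lemma sym_node (n : N) (cs : PTs T N) :
    (PT.node n cs).sym = Symbol.nonterminal n := rfl
@[simp] lemma append_nil' (l : PTs T N) : (PTs.nil).append l = l := rfl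
@[simp] lemma append_cons (hd : PT T N) (tl l : PTs T N) :
    (PTs.cons hd tl).append l = .cons hd (tl.append l) := rfl
@[simp] theorem syms_append : ∀ (l₁ l₂ : PTs T N),
    (l₁.append l₂).syms = l₁.syms ++ l₂.syms
  | .nil, l => rfl
  | .cons hd tl, l => by simp [syms_append tl l]
@[simp] theorem yield_append : ∀ (l₁ l₂ : PTs T N),
    (l₁.append l₂).yield = l₁.yield ++ l₂.yield
  | .nil, l => rfl
  | .cons hd tl, l => by simp [yield_append tl l]
@[simp] theorem size_append : ∀ (l₁ l₂ : PTs T N),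
    (l₁.append l₂).size = l₁.size + l₂.size
  | .nil, l => by simp [PTs.size]
  | .cons hd tl, l => by simp [PTs.size, size_append tl l]; ring
@[simp] lemma size_cons (hd : PT T N) (tl : PTs T N) :
    (PTs.cons hd tl).size = hd.size + tl.size := rfl
@[simp] lemma size_node (n : N) (cs : PTs T N) : (PT.node n cs).size = cs.size + 1 := rfl
@[simp] lemma depth_node (n : N) (cs : PTs T N) : (PT.node n cs).depth = cs.depth + 1 := rfl
@[simp] lemma depth_leaf (t : T) : (PT.leaf t : PT T N).depth = 0 := rfl
@[simp] lemma depth_cons (hd : PT T N) (tl : PTs T N) :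
    (PTs.cons hd tl).depth = max hd.depth tl.depth := rfl


open ContextFreeGrammar

lemma derives_append {g : ContextFreeGrammar T} {u u' v v' : List (Symbol T g.NT)}
    (h₁ : g.Derives u u') (h₂ : g.Derives v v') : g.Derives (u ++ v) (u' ++ v') :=
  (h₁.append_right v).trans (h₂.append_left u')

mutual
inductive PT.Valid (g : ContextFreeGrammar T) : PT T g.NT → Prop where
  | leaf (t : T) : PT.Valid g (.leaf t)
  | node (n : g.NT) (cs : PTs T g.NT) (r : ContextFreeRule T g.NT) (hr : r ∈ g.rules)
      (hi : r.input = n) (ho : r.output = cs.syms) (hcs : PTs.Valid g cs) :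
      PT.Valid g (.node n cs)
inductive PTs.Valid (g : ContextFreeGrammar T) : PTs T g.NT → Prop where
  | nil : PTs.Valid g .nil
  | cons (hd : PT T g.NT) (tl : PTs T g.NT) (h₁ : PT.Valid g hd) (h₂ : PTs.Valid g tl) :
      PTs.Valid g (.cons hd tl)
end

variable {g : ContextFreeGrammar T}

theorem valid_append : ∀ {l₁ : PTs T g.NT} (_ : l₁.Valid g) {l₂ : PTs T g.NT}
    (_ : l₂.Valid g), (l₁.append l₂).Valid g
  | .nil, _, _, h₂ => h₂
  | .cons hd tl, h₁, _, h₂ => by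
      cases h₁ with
      | cons _ _ hhd htl => exact .cons _ _ hhd (valid_append htl h₂)

mutual
theorem PT.sound : ∀ {t : PT T g.NT}, t.Valid g →
    g.Derives [t.sym] (t.yield.map Symbol.terminal)
  | .leaf t, _ => by simp [PT.sym, PT.yield]; rfl
  | .node n cs, h => by
      cases h with
      | node _ _ r hr hi ho hcs =>
        refine Derives.trans (v := cs.syms) (Produces.single ⟨r, hr, ?_⟩) ?_
        · have : r.Rewrites [Symbol.nonterminal r.input] r.output :=
            ContextFreeRule.Rewrites.input_output
          rw [hi, ho] at this
          simpa using this
        · simpa using PTs.sound hcs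
theorem PTs.sound : ∀ {ts : PTs T g.NT}, ts.Valid g →
    g.Derives ts.syms (ts.yield.map Symbol.terminal)
  | .nil, _ => by simp [PTs.syms, PTs.yield]; rfl
  | .cons hd tl, h => by
      cases h with
      | cons _ _ hhd htl =>
        have h1 := PT.sound hhd
        have h2 := PTs.sound htl
        have := derives_append h1 h2
        simpa using this
end


def ofWord {N : Type} : List T → PTs T N
  | [] => .nil
  | t :: w => .cons (.leaf t) (ofWord w)

@[simp] lemma ofWord_syms : ∀ (w : List T), (ofWord (N := N) w).syms = w.map Symbol.terminal
  | [] => rfl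
  | t :: w => by simp [ofWord, ofWord_syms w]

@[simp] lemma ofWord_yield : ∀ (w : List T), (ofWord (N := N) w).yield = w
  | [] => rfl
  | t :: w => by simp [ofWord, ofWord_yield w]

lemma ofWord_valid : ∀ (w : List T), (ofWord (N := g.NT) w).Valid g
  | [] => .nil
  | t :: w => .cons _ _ (.leaf t) (ofWord_valid w)

theorem valid_append_inv : ∀ {l₁ l₂ : PTs T g.NT}, (l₁.append l₂).Valid g →
    l₁.Valid g ∧ l₂.Valid g
  | .nil, l₂, h => ⟨.nil, h⟩
  | .cons hd tl, l₂, h => by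
      cases h with
      | cons _ _ h1 h2 =>
        obtain ⟨ha, hb⟩ := valid_append_inv h2
        exact ⟨.cons _ _ h1 ha, hb⟩

theorem syms_split : ∀ {ts : PTs T N} {l₁ l₂ : List (Symbol T N)},
    ts.syms = l₁ ++ l₂ →
    ∃ ts₁ ts₂ : PTs T N, ts = ts₁.append ts₂ ∧ ts₁.syms = l₁ ∧ ts₂.syms = l₂
  | .nil, l₁, l₂, h => by
      rw [syms_nil] at h
      obtain ⟨h1, h2⟩ := (List.append_eq_nil_iff).mp h.symm
      exact ⟨.nil, .nil, rfl, by simp [h1], by simp [h2]⟩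
  | .cons hd tl, [], l₂, h => ⟨.nil, .cons hd tl, rfl, rfl, h⟩
  | .cons hd tl, s :: l₁, l₂, h => by
      rw [syms_cons] at h
      obtain ⟨h1, h2⟩ := List.cons_eq_cons.mp h
      obtain ⟨ts₁, ts₂, rfl, hs1, hs2⟩ := syms_split (l₁ := l₁) (l₂ := l₂) h2
      exact ⟨.cons hd ts₁, ts₂, rfl, by simp [h1, hs1], hs2⟩

theorem complete {w : List T} : ∀ {s : List (Symbol T g.NT)},
    g.Derives s (w.map Symbol.terminal) →
    ∃ ts : PTs T g.NT, ts.Valid g ∧ ts.syms = s ∧ ts.yield = w := by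
  intro s h
  induction h using Relation.ReflTransGen.head_induction_on with
  | refl => exact ⟨ofWord w, ofWord_valid w, ofWord_syms w, ofWord_yield w⟩
  | head hstep _ ih =>
      obtain ⟨ts, hval, hsyms, hyield⟩ := ih
      obtain ⟨r, hr, hrw⟩ := hstep
      obtain ⟨p, q, hs, hu⟩ := hrw.exists_parts
      rw [hu, List.append_assoc] at hsyms
      obtain ⟨ts₁, ts', rfl, h1, h2⟩ := syms_split hsyms
      obtain ⟨ts₀, ts₂, rfl, h3, h4⟩ := syms_split h2
      obtain ⟨hv1, hv2⟩ := valid_append_inv hval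
      obtain ⟨hv0, hv3⟩ := valid_append_inv hv2
      refine ⟨ts₁.append (.cons (.node r.input ts₀) ts₂), ?_, ?_, ?_⟩
      · exact valid_append hv1 (.cons _ _ (.node _ _ r hr rfl h3.symm hv0) hv3)
      · rw [hs]; simp [h1, h4, List.append_assoc]
      · rw [← hyield]; simp


inductive MemChild : PT T N → PTs T N → Prop where
  | head (c : PT T N) (tl : PTs T N) : MemChild c (.cons c tl)
  | tail (c hd : PT T N) (tl : PTs T N) : MemChild c tl → MemChild c (.cons hd tl)

theorem MemChild.split {c : PT T N} {ts : PTs T N} (h : MemChild c ts) :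
    ∃ ts₁ ts₂ : PTs T N, ts = ts₁.append (.cons c ts₂) := by
  induction h with
  | head tl => exact ⟨.nil, tl, rfl⟩
  | tail hd tl _ ih =>
      obtain ⟨ts₁, ts₂, rfl⟩ := ih
      exact ⟨.cons hd ts₁, ts₂, rfl⟩

theorem MemChild.size_le {c : PT T N} {ts : PTs T N} (h : MemChild c ts) :
    c.size ≤ ts.size := by
  induction h with
  | head tl => simp
  | tail hd tl _ ih => simp; omega

theorem MemChild.valid {c : PT T g.NT} {ts : PTs T g.NT} (h : MemChild c ts)
    (hv : ts.Valid g) : c.Valid g := by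
  induction h with
  | head tl => cases hv with | cons _ _ h1 _ => exact h1
  | tail hd tl _ ih => cases hv with | cons _ _ _ h2 => exact ih h2

inductive Occurs : PT T N → PT T N → Prop where
  | refl (t : PT T N) : Occurs t t
  | step {t₀ c : PT T N} (n : N) {cs : PTs T N} :
      Occurs t₀ c → MemChild c cs → Occurs t₀ (.node n cs)

theorem Occurs.size_le {t₀ t : PT T N} (h : Occurs t₀ t) : t₀.size ≤ t.size := by
  induction h with
  | refl => exact le_refl _
  | step n hoc hmem ih => calc t₀.size ≤ _ := ih
                          _ ≤ _ := hmem.size_le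
                          _ ≤ _ := by simp

theorem Occurs.valid {t₀ t : PT T g.NT} (h : Occurs t₀ t) (hv : t.Valid g) :
    t₀.Valid g := by
  induction h with
  | refl => exact hv
  | step n hoc hmem ih =>
      cases hv with
      | node _ _ r hr hi ho hcs => exact ih (hmem.valid hcs)

lemma produces_node {n : g.NT} {cs : PTs T g.NT} (h : (PT.node n cs).Valid g) :
    g.Produces [Symbol.nonterminal n] cs.syms := by
  cases h with
  | node _ _ r hr hi ho hcs =>
    refine ⟨r, hr, ?_⟩
    have : r.Rewrites [Symbol.nonterminal r.input] r.output :=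
      ContextFreeRule.Rewrites.input_output
    rwa [hi, ho] at this

theorem cut : ∀ {t₀ t : PT T g.NT}, Occurs t₀ t → t.Valid g →
    ∃ v y : List T, t.yield = v ++ t₀.yield ++ y ∧
      g.Derives [t.sym] (v.map Symbol.terminal ++ [t₀.sym] ++ y.map Symbol.terminal) := by
  intro t₀ t hocc
  induction hocc with
  | refl => exact fun _ => ⟨[], [], by simp, by simpa using Derives.refl (g := g) _⟩
  | step n hoc hmem ih =>
      intro hval
      have hprod := produces_node hval
      cases hval with
      | node _ cs r hr hi ho hcs =>
        obtain ⟨ts₁, ts₂, rfl⟩ := hmem.split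
        obtain ⟨hv1, hv2'⟩ := valid_append_inv hcs
        have hcval : _ := hmem.valid hcs
        have hv2 : ts₂.Valid g := by cases hv2' with | cons _ _ _ h2 => exact h2
        obtain ⟨v, y, hy, hd⟩ := ih hcval
        refine ⟨ts₁.yield ++ v, y ++ ts₂.yield, by simp [hy, List.append_assoc], ?_⟩
        refine (hprod.single).trans ?_
        have := derives_append (PTs.sound hv1) (derives_append hd (PTs.sound hv2))
        simpa [List.append_assoc] using this

theorem exists_deep_child : ∀ {ts : PTs T N}, 1 ≤ ts.depth →
    ∃ c, MemChild c ts ∧ c.depth = ts.depth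
  | .nil, h => absurd h (by simp [PTs.depth])
  | .cons hd tl, h => by
      rcases le_or_gt tl.depth hd.depth with hle | hlt
      · exact ⟨hd, .head _ _, by simp [max_eq_left hle]⟩
      · have h1 : 1 ≤ tl.depth := by omega
        obtain ⟨c, hm, hd'⟩ := exists_deep_child h1
        exact ⟨c, .tail _ _ _ hm, by rw [hd']; simp [max_eq_right hlt.le]⟩

def maxRHS (g : ContextFreeGrammar T) : ℕ := max 1 (g.rules.sup fun r => r.output.length)

lemma one_le_maxRHS : 1 ≤ maxRHS g := le_max_left _ _

lemma rhs_le {r : ContextFreeRule T g.NT} (hr : r ∈ g.rules) :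
    r.output.length ≤ maxRHS g :=
  le_trans (Finset.le_sup (f := fun r => r.output.length) hr) (le_max_right _ _)

theorem syms_length : ∀ (ts : PTs T N), ts.syms.length = ts.length
  | .nil => rfl
  | .cons hd tl => by simp [PTs.length, syms_length tl]

mutual
theorem PT.yield_le : ∀ {t : PT T g.NT}, t.Valid g →
    t.yield.length ≤ maxRHS g ^ t.depth
  | .leaf t, _ => by simp
  | .node n cs, h => by
      cases h with
      | node _ _ r hr hi ho hcs =>
        have h1 := PTs.yield_le hcs
        have hlen : cs.length ≤ maxRHS g := by
          rw [← syms_length, ← ho]; exact rhs_le hr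
        calc (PT.node n cs).yield.length = cs.yield.length := by simp
          _ ≤ cs.length * maxRHS g ^ cs.depth := h1
          _ ≤ maxRHS g * maxRHS g ^ cs.depth := Nat.mul_le_mul_right _ hlen
          _ = maxRHS g ^ (cs.depth + 1) := (pow_succ' _ _).symm
          _ = maxRHS g ^ (PT.node n cs).depth := by simp
theorem PTs.yield_le : ∀ {ts : PTs T g.NT}, ts.Valid g →
    ts.yield.length ≤ ts.length * maxRHS g ^ ts.depth
  | .nil, _ => by simp
  | .cons hd tl, h => by
      cases h with
      | cons _ _ h1 h2 =>
        have hh := PT.yield_le h1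
        have ht := PTs.yield_le h2
        have e1 : maxRHS g ^ hd.depth ≤ maxRHS g ^ (PTs.cons hd tl).depth :=
          Nat.pow_le_pow_right one_le_maxRHS (by simp)
        have e2 : maxRHS g ^ tl.depth ≤ maxRHS g ^ (PTs.cons hd tl).depth :=
          Nat.pow_le_pow_right one_le_maxRHS (by simp)
        calc (PTs.cons hd tl).yield.length = hd.yield.length + tl.yield.length := by simp
          _ ≤ maxRHS g ^ (PTs.cons hd tl).depth
              + tl.length * maxRHS g ^ (PTs.cons hd tl).depth := by
                gcongr <;> [exact hh.trans e1; exact ht.trans (Nat.mul_le_mul_left _ e2)]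
          _ = (PTs.cons hd tl).length * maxRHS g ^ (PTs.cons hd tl).depth := by
                simp [PTs.length]; ring
end


lemma PT.size_pos : ∀ t : PT T N, 1 ≤ t.size
  | .leaf _ => le_refl _
  | .node _ cs => by simp

lemma node_valid_inv {n : g.NT} {cs : PTs T g.NT} (h : (PT.node n cs).Valid g) :
    cs.Valid g := by cases h with | node _ _ r hr hi ho hcs => exact hcs

theorem MemChild.yield_le {c : PT T N} {ts : PTs T N} (h : MemChild c ts) :
    c.yield.length ≤ ts.yield.length := by
  obtain ⟨ts₁, ts₂, rfl⟩ := h.split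
  simp
  omega

/-- The conclusion of the pumping argument for a single parse tree. -/
def Concl (g : ContextFreeGrammar T) (t : PT T g.NT) (B : ℕ) : Prop :=
  ∃ (A : g.NT) (u v x y z : List T) (t' : PT T g.NT),
    t.yield = u ++ v ++ x ++ y ++ z ∧
    g.Derives [t.sym]
      (u.map Symbol.terminal ++ [Symbol.nonterminal A] ++ z.map Symbol.terminal) ∧
    g.Derives [Symbol.nonterminal A]
      (v.map Symbol.terminal ++ [Symbol.nonterminal A] ++ y.map Symbol.terminal) ∧
    g.Derives [Symbol.nonterminal A] (x.map Symbol.terminal) ∧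
    t'.Valid g ∧ t'.sym = t.sym ∧ t'.yield = u ++ x ++ z ∧ t'.size < t.size ∧
    v.length + y.length ≤ B

theorem Concl.mono {t : PT T g.NT} {B B' : ℕ} (hB : B ≤ B') (h : Concl g t B) :
    Concl g t B' := by
  obtain ⟨A, u, v, x, y, z, t', h1, h2, h3, h4, h5, h6, h7, h8, h9⟩ := h
  exact ⟨A, u, v, x, y, z, t', h1, h2, h3, h4, h5, h6, h7, h8, h9.trans hB⟩

theorem lift {n : g.NT} {cs : PTs T g.NT} {c : PT T g.NT} {B : ℕ}
    (hval : (PT.node n cs).Valid g) (hmem : MemChild c cs) (h : Concl g c B) :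
    Concl g (PT.node n cs) B := by
  obtain ⟨A, u, v, x, y, z, t', hy, h1, h2, h3, hv', hsym, hy', hsz, hb⟩ := h
  have hprod := produces_node hval
  have hcs := node_valid_inv hval
  have hcv : c.Valid g := hmem.valid hcs
  obtain ⟨ts₁, ts₂, rfl⟩ := hmem.split
  obtain ⟨hv1, hv2'⟩ := valid_append_inv hcs
  have hv2 : ts₂.Valid g := by cases hv2' with | cons _ _ _ h2 => exact h2
  cases hval with
  | node _ _ r hr hi ho hcs' =>
    refine ⟨A, ts₁.yield ++ u, v, x, y, z ++ ts₂.yield,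
      PT.node n (ts₁.append (.cons t' ts₂)), ?_, ?_, h2, h3, ?_, rfl, ?_, ?_, hb⟩
    · simp [hy, List.append_assoc]
    · refine hprod.single.trans ?_
      have := derives_append (PTs.sound hv1) (derives_append h1 (PTs.sound hv2))
      simpa [List.append_assoc] using this
    · refine PT.Valid.node n _ r hr hi ?_ (valid_append hv1 (.cons _ _ hv' hv2))
      rw [ho]
      have : t'.sym = c.sym := hsym
      simp [this]
    · simp [hy', List.append_assoc]
    · have := hsz
      simp
      omega

lemma labels_mem {t : PT T g.NT} {m : g.NT} {cs₀ : PTs T g.NT} (hval : t.Valid g)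
    (hocc : Occurs (.node m cs₀) t) : m ∈ g.rules.image (fun r => r.input) := by
  have := hocc.valid hval
  cases this with
  | node _ _ r hr hi ho hcs => exact Finset.mem_image.mpr ⟨r, hr, hi⟩

theorem rep : ∀ (k : ℕ) (t : PT T g.NT), t.size ≤ k → t.Valid g →
    ∀ S : Finset g.NT, (∀ m cs₀, Occurs (.node m cs₀) t → m ∈ S) →
    S.card + 1 ≤ t.depth → Concl g t t.yield.length := by
  intro k
  induction k with
  | zero => intro t hsz; have := PT.size_pos t; omega
  | succ k ih =>
    intro t hsz hval S hlab hdep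
    match t, hval, hlab, hdep, hsz with
    | .leaf t, _, _, hdep, _ => simp at hdep
    | .node n₁ cs, hval, hlab, hdep, hsz =>
      have hn₁ : n₁ ∈ S := hlab n₁ cs (Occurs.refl _)
      have hcard : 1 ≤ S.card := Finset.card_pos.mpr ⟨n₁, hn₁⟩
      have hdep' : 1 ≤ cs.depth := by simp at hdep; omega
      obtain ⟨c, hmem, hcd⟩ := exists_deep_child hdep'
      have hcs := node_valid_inv hval
      have hcv : c.Valid g := hmem.valid hcs
      by_cases hall : ∀ m cs₀, Occurs (.node m cs₀) c → m ∈ S.erase n₁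
      · have hcsz : c.size ≤ k := by
          have := hmem.size_le
          simp at hsz
          omega
        have hcdep : (S.erase n₁).card + 1 ≤ c.depth := by
          rw [Finset.card_erase_of_mem hn₁, hcd]
          simp at hdep
          omega
        have hc := ih c hcsz hcv _ hall hcdep
        refine Concl.mono ?_ (lift hval hmem hc)
        calc c.yield.length ≤ cs.yield.length := hmem.yield_le
          _ = (PT.node n₁ cs).yield.length := by simp
      · push_neg at hall
        obtain ⟨m, cs₀, hocc, hm⟩ := hall
        have hmS : m ∈ S := hlab m cs₀ (Occurs.step n₁ hocc hmem)
        have hmn : m = n₁ := by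
          by_contra hne
          exact hm (Finset.mem_erase.mpr ⟨hne, hmS⟩)
        subst hmn
        have hocct : Occurs (PT.node m cs₀) (PT.node m cs) := Occurs.step m hocc hmem
        obtain ⟨v, y, hy, hD⟩ := cut hocct hval
        have ht₀v : (PT.node m cs₀).Valid g := hocct.valid hval
        refine ⟨m, [], v, (PT.node m cs₀).yield, y, [], PT.node m cs₀, ?_, ?_, ?_, ?_,
          ht₀v, rfl, by simp, ?_, ?_⟩
        · simpa [List.append_assoc] using hy
        · simpa using Derives.refl (g := g) _
        · simpa using hD
        · simpa using PT.sound ht₀v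
        · have h1 : cs₀.size + 1 ≤ c.size := by simpa using hocc.size_le
          have h2 := hmem.size_le
          simp
          omega
        · have : (PT.node m cs).yield.length
              = v.length + (PT.node m cs₀).yield.length + y.length := by
            rw [hy]; simp; omega
          omega

theorem deep : ∀ (k : ℕ) (t : PT T g.NT), t.size ≤ k → t.Valid g →
    (g.rules.image (fun r => r.input)).card + 1 ≤ t.depth →
    Concl g t (maxRHS g ^ ((g.rules.image (fun r => r.input)).card + 1)) := by
  intro k
  induction k with
  | zero => intro t hsz; exact absurd (PT.size_pos t) (by omega)
  | succ k ih =>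
    intro t hsz hval hdep
    set K := (g.rules.image (fun r => r.input)).card with hK
    by_cases hexact : t.depth = K + 1
    · have hc := rep t.size t le_rfl hval _ (fun m cs₀ h => labels_mem hval h)
        (by rw [hexact])
      refine Concl.mono ?_ hc
      calc t.yield.length ≤ maxRHS g ^ t.depth := PT.yield_le hval
        _ = maxRHS g ^ (K + 1) := by rw [hexact]
    · have hdep2 : K + 2 ≤ t.depth := by omega
      match t, hval, hdep2, hsz with
      | .leaf t, _, hdep2, _ => simp at hdep2
      | .node n₁ cs, hval, hdep2, hsz =>
        have hdep' : 1 ≤ cs.depth := by simp at hdep2; omega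
        obtain ⟨c, hmem, hcd⟩ := exists_deep_child hdep'
        have hcs := node_valid_inv hval
        have hcv : c.Valid g := hmem.valid hcs
        have hcsz : c.size ≤ k := by
          have := hmem.size_le
          simp at hsz
          omega
        have hcdep : K + 1 ≤ c.depth := by
          rw [hcd]
          simp at hdep2
          omega
        exact lift hval hmem (ih c hcsz hcv hcdep)


def npow (l : List T) : ℕ → List T
  | 0 => []
  | n + 1 => npow l n ++ l

@[simp] lemma npow_zero (l : List T) : npow l 0 = [] := rfl
@[simp] lemma npow_succ (l : List T) (n : ℕ) : npow l (n + 1) = npow l n ++ l := rfl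

@[simp] lemma map_npow {β : Type} (f : T → β) (l : List T) :
    ∀ n : ℕ, (npow l n).map f = npow (l.map f) n
  | 0 => rfl
  | n + 1 => by simp [map_npow f l n]

lemma npow_comm (l : List T) : ∀ n : ℕ, l ++ npow l n = npow l n ++ l
  | 0 => by simp
  | n + 1 => by
      rw [npow_succ, ← List.append_assoc, ← npow_comm l n, List.append_assoc]

theorem pumping (g : ContextFreeGrammar.{0} T) :
    ∃ p P : ℕ, 1 ≤ P ∧ ∀ w ∈ g.language, p ≤ w.length →
      ∃ u v x y z : List T, w = u ++ v ++ x ++ y ++ z ∧ 1 ≤ v.length + y.length ∧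
        v.length + y.length ≤ P ∧
        ∀ n : ℕ, (u ++ npow v n ++ x ++ npow y n ++ z) ∈ g.language := by
  classical
  set K := (g.rules.image (fun r => r.input)).card with hK
  refine ⟨maxRHS g ^ K + 1, maxRHS g ^ (K + 1), Nat.one_le_pow _ _ (by
    have := one_le_maxRHS (g := g); omega), ?_⟩
  intro w hw hlen
  rw [ContextFreeGrammar.mem_language_iff] at hw
  obtain ⟨ts, hval, hsyms, hyield⟩ := complete (w := w) hw
  -- extract a single tree with root the initial symbol and yield `w`
  have hex : ∃ t : PT T g.NT, t.Valid g ∧ t.sym = Symbol.nonterminal g.initial ∧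
      t.yield = w := by
    match ts, hval, hsyms, hyield with
    | .nil, _, hsyms, _ => simp at hsyms
    | .cons hd tl, hval, hsyms, hyield =>
      rw [syms_cons] at hsyms
      obtain ⟨hs1, hs2⟩ := List.cons_eq_cons.mp hsyms
      match tl, hs2, hyield with
      | .nil, _, hyield =>
        cases hval with
        | cons _ _ h1 _ => exact ⟨hd, h1, hs1, by simpa using hyield⟩
  -- choose a minimal such tree
  have hexk : ∃ k : ℕ, ∃ t : PT T g.NT, t.Valid g ∧
      t.sym = Symbol.nonterminal g.initial ∧ t.yield = w ∧ t.size = k := by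
    obtain ⟨t, h1, h2, h3⟩ := hex
    exact ⟨t.size, t, h1, h2, h3, rfl⟩
  obtain ⟨t, htv, hts, hty, htk⟩ := Nat.find_spec hexk
  -- the minimal tree is deep
  have hdeep : K + 1 ≤ t.depth := by
    by_contra hcon
    have h1 : t.yield.length ≤ maxRHS g ^ t.depth := PT.yield_le htv
    have h2 : maxRHS g ^ t.depth ≤ maxRHS g ^ K :=
      Nat.pow_le_pow_right one_le_maxRHS (by omega)
    rw [hty] at h1
    omega
  obtain ⟨A, u, v, x, y, z, t', hy, h1, h2, h3, hv', hsym', hy', hsz, hb⟩ :=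
    deep t.size t le_rfl htv hdeep
  have hvy : 1 ≤ v.length + y.length := by
    by_contra hcon
    have hv0 : v = [] := by
      have : v.length = 0 := by omega
      exact List.length_eq_zero_iff.mp this
    have hy0 : y = [] := by
      have : y.length = 0 := by omega
      exact List.length_eq_zero_iff.mp this
    subst hv0; subst hy0
    have hQ : ∃ t'' : PT T g.NT, t''.Valid g ∧
        t''.sym = Symbol.nonterminal g.initial ∧ t''.yield = w ∧ t''.size = t'.size :=
      ⟨t', hv', by rw [hsym', hts], by rw [hy']; rw [← hty, hy]; simp, rfl⟩
    have := Nat.find_min hexk (m := t'.size) (by omega) hQ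
    exact this
  refine ⟨u, v, x, y, z, by rw [← hty, hy], hvy, hb, ?_⟩
  -- the pumped words are all generated
  have Dn : ∀ n : ℕ, g.Derives [Symbol.nonterminal A]
      ((npow v n).map Symbol.terminal ++ [Symbol.nonterminal A]
        ++ (npow y n).map Symbol.terminal) := by
    intro n
    induction n with
    | zero => simpa using Relation.ReflTransGen.refl
    | succ n ihn =>
        refine ihn.trans ?_
        have := derives_append (Relation.ReflTransGen.refl
            (a := (npow v n).map (Symbol.terminal (N := g.NT))))
          (derives_append h2 (Relation.ReflTransGen.refl
            (a := (npow y n).map (Symbol.terminal (N := g.NT)))))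
        simpa [List.append_assoc, npow_comm] using this
  intro n
  rw [ContextFreeGrammar.mem_language_iff]
  have big : g.Derives [Symbol.nonterminal A]
      ((npow v n).map Symbol.terminal ++ x.map Symbol.terminal
        ++ (npow y n).map Symbol.terminal) := by
    refine (Dn n).trans ?_
    have := derives_append (Relation.ReflTransGen.refl
        (a := (npow v n).map (Symbol.terminal (N := g.NT))))
      (derives_append h3 (Relation.ReflTransGen.refl
        (a := (npow y n).map (Symbol.terminal (N := g.NT)))))
    simpa [List.append_assoc] using this
  have full : g.Derives [t.sym]
      (u.map Symbol.terminal ++ ((npow v n).map Symbol.terminal ++ x.map Symbol.terminal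
        ++ (npow y n).map Symbol.terminal) ++ z.map Symbol.terminal) := by
    refine h1.trans ?_
    have := derives_append (Relation.ReflTransGen.refl
        (a := u.map (Symbol.terminal (N := g.NT))))
      (derives_append big (Relation.ReflTransGen.refl
        (a := z.map (Symbol.terminal (N := g.NT)))))
    simpa [List.append_assoc] using this
  rw [hts] at full
  simpa [List.append_assoc] using full

end CFPump

lemma exists_small_pos_comb (a b : ℝ) (ha : 0 < a) (hb : 0 < b)
    (hir : Irrational (a / b)) :
    ∀ ε > 0, ∃ i j : ℕ, 1 ≤ j ∧ 0 < a * i - b * j ∧ a * i - b * j < ε := by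
  intro ε hε
  -- the subgroup of integer combinations of `a` and `b`
  set S : AddSubgroup ℝ :=
    { carrier := {x | ∃ m n : ℤ, x = m * a + n * b}
      zero_mem' := ⟨0, 0, by simp⟩
      add_mem' := by
        rintro x y ⟨m₁, n₁, rfl⟩ ⟨m₂, n₂, rfl⟩
        exact ⟨m₁ + m₂, n₁ + n₂, by push_cast; ring⟩
      neg_mem' := by
        rintro x ⟨m, n, rfl⟩
        exact ⟨-m, -n, by push_cast; ring⟩ } with hS
  -- `S` is not cyclic
  have hnotcyc : ¬ ∃ c : ℝ, S = AddSubgroup.closure {c} := by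
    rintro ⟨c, hc⟩
    have haS : a ∈ S := ⟨1, 0, by simp⟩
    have hbS : b ∈ S := ⟨0, 1, by simp⟩
    rw [hc, AddSubgroup.mem_closure_singleton] at haS hbS
    obtain ⟨p, hp⟩ := haS
    obtain ⟨q, hq⟩ := hbS
    have hq0 : (q : ℝ) ≠ 0 := by
      rintro h0
      rw [zsmul_eq_mul, h0, zero_mul] at hq
      exact absurd hq.symm (ne_of_gt hb)
    have hc0 : c ≠ 0 := by
      rintro rfl
      rw [zsmul_eq_mul, mul_zero] at hp
      exact absurd hp.symm (ne_of_gt ha)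
    refine hir ⟨(p : ℚ) / (q : ℚ), ?_⟩
    rw [← hp, ← hq]
    push_cast
    rw [zsmul_eq_mul, zsmul_eq_mul]
    field_simp
  -- hence arbitrarily small positive elements exist
  have hsmall : ∀ η : ℝ, 0 < η → ∃ g₀ ∈ S, g₀ ∈ Set.Ioo 0 η := by
    intro η hη
    by_contra hcon
    push_neg at hcon
    refine hnotcyc (AddSubgroup.cyclic_of_isolated_zero hη ?_)
    rw [Set.disjoint_left]
    intro x hx hx2
    exact absurd hx2 (hcon x hx)
  set ε' := min ε a with hε'
  have hε'pos : 0 < ε' := lt_min hε ha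
  obtain ⟨g₀, ⟨m, n, hmn⟩, hg₀pos, hg₀lt⟩ := hsmall ε' hε'pos
  -- helper: a combination with negative coefficient on `b` gives the result
  have key : ∀ m' n' : ℤ, n' < 0 → 0 < (m' : ℝ) * a + n' * b →
      (m' : ℝ) * a + n' * b < ε' →
      ∃ i j : ℕ, 1 ≤ j ∧ 0 < a * i - b * j ∧ a * i - b * j < ε := by
    intro m' n' hn' hpos hlt
    have hm' : 0 < m' := by
      by_contra hm
      push_neg at hm
      have h1 : (m' : ℝ) ≤ 0 := by exact_mod_cast hm
      have h2 : (n' : ℝ) ≤ -1 := by exact_mod_cast (by omega : n' ≤ -1)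
      nlinarith
    have e1 : ((m'.toNat : ℕ) : ℝ) = (m' : ℝ) := by
      exact_mod_cast congrArg (fun z : ℤ => (z : ℝ)) (Int.toNat_of_nonneg hm'.le)
    have e2 : (((-n').toNat : ℕ) : ℝ) = -(n' : ℝ) := by
      have h3 : ((-n').toNat : ℤ) = -n' := Int.toNat_of_nonneg (by omega)
      exact_mod_cast congrArg (fun z : ℤ => (z : ℝ)) h3
    have heq : a * ((m'.toNat : ℕ) : ℝ) - b * (((-n').toNat : ℕ) : ℝ)
        = (m' : ℝ) * a + (n' : ℝ) * b := by
      rw [e1, e2]; ring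
    refine ⟨m'.toNat, (-n').toNat, by omega, ?_, ?_⟩
    · rw [heq]; exact hpos
    · rw [heq]; exact hlt.trans_le (min_le_left _ _)
  rcases lt_trichotomy n 0 with hn | hn | hn
  · exact key m n hn (hmn ▸ hg₀pos) (hmn ▸ hg₀lt)
  · exfalso
    subst hn
    rw [hmn] at hg₀pos hg₀lt
    simp at hg₀pos hg₀lt
    have hm1 : 1 ≤ m := by
      by_contra hm
      push_neg at hm
      have : (m : ℝ) ≤ 0 := by exact_mod_cast (by omega : m ≤ 0)
      nlinarith
    have : (1 : ℝ) ≤ (m : ℝ) := by exact_mod_cast hm1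
    have hεa : ε' ≤ a := min_le_right _ _
    nlinarith
  · -- walk down below `a` using multiples of `g₀`
    set k : ℤ := ⌈a / g₀⌉ - 1 with hk
    have hx : (k : ℝ) < a / g₀ := by
      have h1 := Int.ceil_lt_add_one (a / g₀)
      push_cast [hk]
      linarith
    have hx2 : a / g₀ ≤ (k : ℝ) + 1 := by
      have h1 := Int.le_ceil (a / g₀)
      push_cast [hk]
      linarith
    have hk1 : (k : ℝ) * g₀ < a := (lt_div_iff₀ hg₀pos).mp hx
    have hk2 : a ≤ ((k : ℝ) + 1) * g₀ := (div_le_iff₀ hg₀pos).mp hx2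
    have hga : g₀ < a := lt_of_lt_of_le hg₀lt (min_le_right _ _)
    have hkpos : 1 ≤ k := by
      have h2 : (1 : ℤ) < ⌈a / g₀⌉ := Int.lt_ceil.mpr (by
        rw [lt_div_iff₀ hg₀pos]; push_cast; linarith)
      omega
    have hval : ((1 - k * m : ℤ) : ℝ) * a + ((-(k * n) : ℤ) : ℝ) * b = a - k * g₀ := by
      rw [hmn]; push_cast; ring
    have hkn : 0 < k * n := mul_pos (by omega) hn
    refine key (1 - k * m) (-(k * n)) (by omega) ?_ ?_
    · rw [hval]; linarith
    · rw [hval]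
      have h3 : a - (k : ℝ) * g₀ ≤ g₀ := by linarith
      linarith


lemma count_npow (l : List Bool) (t : Bool) :
    ∀ n : ℕ, (CFPump.npow l n).count t = n * l.count t
  | 0 => by simp [CFPump.npow]
  | n + 1 => by
      simp [CFPump.npow_succ, List.count_append, count_npow l t n]
      ring

lemma count_tf : ∀ l : List Bool, l.count true + l.count false = l.length
  | [] => rfl
  | b :: l => by
      have ih := count_tf l
      cases b <;> simp [List.count_cons] <;> omega

theorem stmt5' (a b : ℝ) (ha : 0 < a) (hb : 0 < b) (hir : Irrational (a / b)) :
    ¬ Language.IsContextFree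
      {w : List Bool | ∃ i j : ℕ,
        w = List.replicate i true ++ List.replicate j false ∧
        0 ≤ a * i - b * j} := by
  classical
  rintro ⟨g, hg⟩
  obtain ⟨p, P, hP1, hpump⟩ := CFPump.pumping g
  -- the finite set of positive values `a·α − b·β` with `α, β ≤ P`, and its minimum δ
  set Fpos : Finset ℝ := (((Finset.range (P + 1)) ×ˢ (Finset.range (P + 1))).image
      (fun q : ℕ × ℕ => a * q.1 - b * q.2)).filter (fun x => 0 < x) with hFpos
  have haF : a ∈ Fpos := by
    refine Finset.mem_filter.mpr ⟨Finset.mem_image.mpr ⟨(1, 0), ?_, by simp⟩, ha⟩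
    refine Finset.mem_product.mpr ⟨Finset.mem_range.mpr (by omega), Finset.mem_range.mpr (by omega)⟩
  have hne : Fpos.Nonempty := ⟨a, haF⟩
  set δ := Fpos.min' hne with hδdef
  have hδpos : 0 < δ := (Finset.mem_filter.mp (Fpos.min'_mem hne)).2
  have hδle : ∀ α' β' : ℕ, α' ≤ P → β' ≤ P → 0 < a * α' - b * β' →
      δ ≤ a * α' - b * β' := by
    intro α' β' hα' hβ' hpos
    refine Finset.min'_le _ _ (Finset.mem_filter.mpr
      ⟨Finset.mem_image.mpr ⟨(α', β'), ?_, rfl⟩, hpos⟩)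
    exact Finset.mem_product.mpr ⟨Finset.mem_range.mpr (by omega),
      Finset.mem_range.mpr (by omega)⟩
  clear_value δ
  clear hδdef haF hne hFpos
  clear Fpos
  -- choose a word `replicate i true ++ replicate j false` with `0 < a·i − b·j < δ` and long
  obtain ⟨i₀, j₀, hj₀, hc0, hcδ⟩ := exists_small_pos_comb a b ha hb hir (δ / (p + 1))
    (by positivity)
  set i := (p + 1) * i₀ with hidef
  set j := (p + 1) * j₀ with hjdef
  have hij : a * (i : ℝ) - b * (j : ℝ) = (p + 1) * (a * i₀ - b * j₀) := by
    rw [hidef, hjdef]; push_cast; ring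
  have hc1 : 0 < a * (i : ℝ) - b * (j : ℝ) := by rw [hij]; positivity
  have hc2 : a * (i : ℝ) - b * (j : ℝ) < δ := by
    rw [hij]
    calc ((p : ℝ) + 1) * (a * i₀ - b * j₀) < ((p : ℝ) + 1) * (δ / (p + 1)) := by
          apply mul_lt_mul_of_pos_left hcδ
          positivity
      _ = δ := by field_simp
  set w : List Bool := List.replicate i true ++ List.replicate j false with hwdef
  have hwL : w ∈ g.language := by
    rw [hg]
    exact ⟨i, j, rfl, hc1.le⟩
  have hwlen : p ≤ w.length := by
    have : j = (p + 1) * j₀ := rfl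
    have h1 : p + 1 ≤ j := by
      calc p + 1 = (p + 1) * 1 := by omega
        _ ≤ (p + 1) * j₀ := Nat.mul_le_mul_left _ hj₀
    simp [hwdef]
    omega
  obtain ⟨u, v, x, y, z, hw, hvy1, hvyP, hmem⟩ := hpump w hwL hwlen
  clear hwL hpump
  -- counting letters
  obtain ⟨i₁, hi₁⟩ : ∃ k, k = u.count true + x.count true + z.count true := ⟨_, rfl⟩
  obtain ⟨j₁, hj₁⟩ : ∃ k, k = u.count false + x.count false + z.count false := ⟨_, rfl⟩
  obtain ⟨α, hα⟩ : ∃ k, k = v.count true + y.count true := ⟨_, rfl⟩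
  obtain ⟨β, hβ⟩ : ∃ k, k = v.count false + y.count false := ⟨_, rfl⟩
  have hwt : w.count true = i := by
    rw [hwdef]; simp [List.count_append, List.count_replicate]
  have hwf : w.count false = j := by
    rw [hwdef]; simp [List.count_append, List.count_replicate]
  have hit : i = i₁ + α := by
    have h := congrArg (List.count true) hw
    rw [hwt] at h
    simp [List.count_append] at h
    omega
  have hjf : j = j₁ + β := by
    have h := congrArg (List.count false) hw
    rw [hwf] at h
    simp [List.count_append] at h
    omega
  clear_value w
  -- the key family of inequalities from pumping
  have key : ∀ n : ℕ, 0 ≤ a * ((i₁ : ℝ) + n * α) - b * ((j₁ : ℝ) + n * β) := by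
    intro n
    have hm := hmem n
    rw [hg] at hm
    obtain ⟨I, J, hIJ, hineq⟩ := hm
    have hIt : i₁ + n * α = I := by
      have hcong := congrArg (List.count true) hIJ
      simp [List.count_append, count_npow, List.count_replicate] at hcong
      have hdist : n * α = n * (v.count true) + n * (y.count true) := by rw [hα]; ring
      omega
    have hJf : j₁ + n * β = J := by
      have hcong := congrArg (List.count false) hIJ
      simp [List.count_append, count_npow, List.count_replicate] at hcong
      have hdist : n * β = n * (v.count false) + n * (y.count false) := by rw [hβ]; ring
      omega
    have e1 : ((i₁ + n * α : ℕ) : ℝ) = (I : ℝ) := by exact_mod_cast hIt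
    have e2 : ((j₁ + n * β : ℕ) : ℝ) = (J : ℝ) := by exact_mod_cast hJf
    push_cast at e1 e2
    rw [← e1, ← e2] at hineq
    exact hineq
  -- α + β ≥ 1, α ≤ P, β ≤ P
  have hαβ : 1 ≤ α + β := by
    have h1 := count_tf v
    have h2 := count_tf y
    omega
  have hαP : α ≤ P := by
    have h1 := (List.count_le_length : List.count true v ≤ v.length)
    have h2 := (List.count_le_length : List.count true y ≤ y.length)
    omega
  have hβP : β ≤ P := by
    have h1 := (List.count_le_length : List.count false v ≤ v.length)
    have h2 := (List.count_le_length : List.count false y ≤ y.length)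
    omega
  -- trichotomy on d = a·α − b·β
  have hiR : (i : ℝ) = (i₁ : ℝ) + (α : ℝ) := by exact_mod_cast hit
  have hjR : (j : ℝ) = (j₁ : ℝ) + (β : ℝ) := by exact_mod_cast hjf
  rcases lt_trichotomy (a * (α : ℝ) - b * (β : ℝ)) 0 with hd | hd | hd
  · -- pumping up forever fails
    obtain ⟨n, hn⟩ := exists_nat_gt ((a * i₁ - b * j₁) / (b * β - a * α))
    have hden : 0 < b * (β : ℝ) - a * (α : ℝ) := by linarith
    have h1 := key n
    rw [div_lt_iff₀ hden] at hn
    have hexp : a * ((i₁ : ℝ) + n * α) - b * ((j₁ : ℝ) + n * β)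
        = (a * i₁ - b * j₁) - n * (b * β - a * α) := by ring
    linarith
  · -- `a/b` would be rational
    have hα0 : 0 < α := by
      by_contra h
      push_neg at h
      have hα0' : α = 0 := by omega
      rw [hα0'] at hd
      have hβ0' : β = 0 := by
        by_contra hβ0
        have h1 : 1 ≤ β := by omega
        have h2 : (1 : ℝ) ≤ (β : ℝ) := by exact_mod_cast h1
        simp at hd
        rcases hd with h4 | h4
        · linarith
        · omega
      omega
    have hβ0 : 0 < β := by
      by_contra h
      push_neg at h
      have hβ0' : β = 0 := by omega
      rw [hβ0'] at hd
      have h2 : (1 : ℝ) ≤ (α : ℝ) := by exact_mod_cast hα0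
      simp at hd
      rcases hd with h4 | h4
      · linarith
      · omega
    refine hir ⟨(β : ℚ) / (α : ℚ), ?_⟩
    have hαR : (0 : ℝ) < (α : ℝ) := by exact_mod_cast hα0
    have hab : a * (α : ℝ) = b * (β : ℝ) := by linarith
    push_cast
    rw [div_eq_div_iff (ne_of_gt hαR) (ne_of_gt hb)]
    linarith
  · -- pumping down fails
    have hδd : δ ≤ a * (α : ℝ) - b * (β : ℝ) := hδle α β hαP hβP hd
    have h0 := key 0
    simp at h0
    rw [hiR, hjR] at hc2
    linarith



/-- For `a, b > 0` with `a/b` irrational, the language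
`{s_a^i s_b^j : a·i − b·j ≥ 0}` (with `s_a` encoded by `true` and `s_b` by
`false`) is not context-free. -/
theorem stmt5 (a b : ℝ) (ha : 0 < a) (hb : 0 < b) (hir : Irrational (a / b)) :
    ¬ Language.IsContextFree
      {w : List Bool | ∃ i j : ℕ,
        w = List.replicate i true ++ List.replicate j false ∧
        0 ≤ a * i - b * j} := by
  exact stmt5' a b ha hb hir
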